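/- arXiv:2206.09884 — 2 statements merged into one kernel-verified Lean document; each statement's English description precedes it below -/
import Mathlib

section
/- Let G be a finite simple graph and let P be a path in G such that every vertex of P has degree exactly 2 in G and N_G(V(P)) = {a, b} for two distinct vertices a, b. Let S ⊆ V(G) \ V(P) and r ∉ V(P) ∪ S be such that the connected component H of (G − V(P)) − S containing r is acyclic and contains both a and b. Then for every m ∈ V(P), the connected component of (G − S) − m containing r is acyclic, has vertex set V(H) ∪ (V(P) \ {m}), and has m in its open neighborhood. -/
namespace Secluded

open SimpleGraph

variable {V : Type*}

/-- The open neighborhood of a vertex set `S`: vertices outside `S` with a neighbor in `S`. -/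
def openNbhd (G : SimpleGraph V) (S : Set V) : Set V :=
  {v | v ∉ S ∧ ∃ u ∈ S, G.Adj v u}

/-- The graph obtained from `G` by deleting the vertices in `D`
(kept on the same vertex type; deleted vertices become isolated). -/
def gdelete (G : SimpleGraph V) (D : Set V) : SimpleGraph V where
  Adj x y := G.Adj x y ∧ x ∉ D ∧ y ∉ D
  symm := ⟨fun _ _ h => ⟨h.1.symm, h.2.2, h.2.1⟩⟩
  loopless := ⟨fun x h => G.loopless.irrefl x h.1⟩

attribute [reducible] gdelete

/-- `S` induces a tree (connected and acyclic induced subgraph) in `G`. -/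
def IsInducedTree (G : SimpleGraph V) (S : Set V) : Prop :=
  (G.induce S).IsTree

/-- `S` is a `k`-secluded tree in `G`. -/
def IsSecludedTree (G : SimpleGraph V) (k : ℕ) (S : Set V) : Prop :=
  IsInducedTree G S ∧ (openNbhd G S).ncard ≤ k

/-- The set of `k`-secluded supertrees of `F` in `G`. -/
def secl (G : SimpleGraph V) (k : ℕ) (F : Set V) : Set (Set V) :=
  {S | IsSecludedTree G k S ∧ F ⊆ S}

/-- Total weight of a vertex set. -/
noncomputable def weight (w : V → ℕ) (S : Set V) : ℕ := ∑ᶠ x ∈ S, w x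

/-- The maximum-weight elements of a collection of vertex sets. -/
def maxset (w : V → ℕ) (X : Set (Set V)) : Set (Set V) :=
  {S | S ∈ X ∧ ∀ S' ∈ X, weight w S' ≤ weight w S}

/-- `S` consists of exactly one vertex from each member of `𝒳`. -/
def IsTransversal (𝒳 : Set (Set V)) (S : Set V) : Prop :=
  S ⊆ ⋃₀ 𝒳 ∧ ∀ X ∈ 𝒳, (S ∩ X).ncard = 1

/-- The vertex set of the connected component of `G − S` containing `r`. -/
def component (G : SimpleGraph V) (S : Set V) (r : V) : Set V :=
  {x | (gdelete G S).Reachable r x}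

/-- `(r, 𝒳)` is a description for `G`. -/
def IsDescription (G : SimpleGraph V) (r : V) (𝒳 : Set (Set V)) : Prop :=
  (∀ X ∈ 𝒳, r ∉ X) ∧ 𝒳.Pairwise Disjoint ∧
    ∀ S : Set V, IsTransversal 𝒳 S →
      (G.induce (component G S r)).IsAcyclic ∧ openNbhd G (component G S r) = S

/-- The induced tree (given by its vertex set `C`) is described by the description `D`. -/
def Describes (G : SimpleGraph V) (D : V × Set (Set V)) (C : Set V) : Prop :=
  D.1 ∈ C ∧ IsTransversal D.2 (openNbhd G C)

/-- `𝒯_G(𝔛)`: the set of induced trees of `G` described by some member of `𝔛`. -/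
def treesOf (G : SimpleGraph V) (𝔛 : Set (V × Set (Set V))) : Set (Set V) :=
  {C | IsInducedTree G C ∧ ∃ D ∈ 𝔛, Describes G D C}

/-- No induced tree of `G` is described by two distinct members of `𝔛`. -/
def NonRedundant (G : SimpleGraph V) (𝔛 : Set (V × Set (Set V))) : Prop :=
  ∀ C : Set V, IsInducedTree G C → ∀ D₁ ∈ 𝔛, ∀ D₂ ∈ 𝔛,
    Describes G D₁ C → Describes G D₂ C → D₁ = D₂

/-- Degree of a vertex. -/
noncomputable def degOf (G : SimpleGraph V) (v : V) : ℕ := (G.neighborSet v).ncard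



/-! ### Auxiliary lemmas for Statement 14 -/

section Aux

variable {G : SimpleGraph V}

lemma gdelete_anti {D D' : Set V} (h : D' ⊆ D) : gdelete G D ≤ gdelete G D' :=
  fun _ _ ha => ⟨ha.1, fun c => ha.2.1 (h c), fun c => ha.2.2 (h c)⟩

lemma walk_end_mem {G' : SimpleGraph V} {T : Set V}
    (hcl : ∀ u ∈ T, ∀ v, G'.Adj u v → v ∈ T) :
    ∀ {a b : V} (_ : G'.Walk a b), a ∈ T → b ∈ T := by
  intro a b w
  induction w with
  | nil => exact id
  | cons h p ih => intro ha; exact ih (hcl _ ha _ h)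

lemma component_not_mem {D : Set V} {r : V} (hr : r ∉ D) :
    ∀ v ∈ component G D r, v ∉ D := by
  intro v hv hvD
  obtain ⟨w⟩ := (hv : (gdelete G D).Reachable r v)
  cases w.reverse with
  | nil => exact hr hvD
  | cons h p => exact h.2.1 hvD

lemma mem_component_self {D : Set V} {r : V} : r ∈ component G D r := Reachable.refl r

lemma component_eq {D T : Set V} {r : V} (hrT : r ∈ T)
    (hcl : ∀ u ∈ T, ∀ v, (gdelete G D).Adj u v → v ∈ T)
    (hre : ∀ u ∈ T, (gdelete G D).Reachable r u) :
    component G D r = T := by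
  apply Set.eq_of_subset_of_subset
  · intro v hv
    obtain ⟨w⟩ := (hv : (gdelete G D).Reachable r v)
    exact walk_end_mem hcl w hrT
  · exact hre

lemma nbrs_eq [Fintype V] {z p q : V} (hdeg : degOf G z = 2) (hpq : p ≠ q)
    (hp : G.Adj z p) (hq : G.Adj z q) : G.neighborSet z = {p, q} := by
  refine (Set.eq_of_subset_of_ncard_le ?_ ?_ (Set.toFinite _)).symm
  · rintro w (h | h)
    · exact h ▸ hp
    · exact h ▸ hq
  · rw [Set.ncard_pair hpq]
    exact le_of_eq hdeg

lemma adj_mem_pair [Fintype V] {z p q w : V} (hdeg : degOf G z = 2) (hpq : p ≠ q)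
    (hp : G.Adj z p) (hq : G.Adj z q) (hw : G.Adj z w) : w = p ∨ w = q := by
  have hmem : w ∈ G.neighborSet z := hw
  rw [nbrs_eq hdeg hpq hp hq] at hmem
  exact hmem

/-- A walk in `G` all whose vertices lie in `T`, lifted to the induced graph. -/
def liftW (T : Set V) : ∀ {u v : V} (p : G.Walk u v) (_ : ∀ z ∈ p.support, z ∈ T),
    (G.induce T).Walk ⟨u, by exact ‹∀ z ∈ _, z ∈ T› u p.start_mem_support⟩
      ⟨v, by exact ‹∀ z ∈ _, z ∈ T› v p.end_mem_support⟩
  | _, _, Walk.nil, _ => Walk.nil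
  | _, _, Walk.cons h q, hp =>
      Walk.cons (by exact h) (liftW T q (fun z hz => hp z (by simp [hz])))

lemma liftW_map {T : Set V} : ∀ {u v : V} (p : G.Walk u v) (hp : ∀ z ∈ p.support, z ∈ T),
    ((liftW T p hp).map (Embedding.induce T).toHom) = p
  | _, _, Walk.nil, _ => rfl
  | _, _, Walk.cons h q, hp => by
      exact congrArg (Walk.cons h) (liftW_map q (fun z hz => hp z (by simp [hz])))

/-- Acyclicity of the induced subgraph, phrased with walks in the ambient graph. -/
def AcycOn (G : SimpleGraph V) (T : Set V) : Prop :=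
  ∀ ⦃u : V⦄ (c : G.Walk u u), c.IsCycle → ∃ z ∈ c.support, z ∉ T

lemma induce_val_injective {T : Set V} :
    Function.Injective ⇑(Embedding.induce (G := G) T).toHom := by
  intro a b h
  exact Subtype.ext (by exact h)

lemma acycOn_of_induce {T : Set V} (h : (G.induce T).IsAcyclic) : AcycOn G T := by
  intro u c hc
  by_contra hall
  push_neg at hall
  have hmap := liftW_map c hall
  rw [← hmap] at hc
  exact h _ ((Walk.map_isCycle_iff_of_injective induce_val_injective).mp hc)

lemma induce_acyclic_of_acycOn {T : Set V} (h : AcycOn G T) : (G.induce T).IsAcyclic := by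
  intro v c hc
  obtain ⟨z, hz, hzT⟩ := h _ (hc.map induce_val_injective)
  rw [Walk.support_map] at hz
  obtain ⟨z', _, rfl⟩ := List.mem_map.mp hz
  exact hzT z'.2

lemma isPath_loop_nil {u : V} {p : G.Walk u u} (hp : p.IsPath) : p.Nil := by
  cases p with
  | nil => exact Walk.Nil.nil
  | cons h q =>
    exfalso
    have := hp.support_nodup
    rw [Walk.support_cons, List.nodup_cons] at this
    exact this.1 q.end_mem_support

/-- In a cycle based at `v`, there are two distinct neighbors of `v` on the cycle. -/
lemma cycle_two_nbrs {v : V} {c : G.Walk v v} (hc : c.IsCycle) :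
    ∃ w₁ w₂, w₁ ≠ w₂ ∧ G.Adj v w₁ ∧ G.Adj v w₂ ∧ w₁ ∈ c.support ∧ w₂ ∈ c.support := by
  have hnn : ¬ c.Nil := by
    rw [Walk.nil_iff_length_eq]
    have := hc.three_le_length
    omega
  obtain ⟨w₁, h₁, q, rfl⟩ := Walk.not_nil_iff.mp hnn
  have hq : q.IsPath := ((Walk.cons_isCycle_iff q h₁).mp hc).1
  have hqr : q.reverse.IsPath := hq.reverse
  have hnnq : ¬ q.reverse.Nil := Walk.not_nil_of_ne h₁.ne
  obtain ⟨w₂, h₂, q₂, hq2⟩ := Walk.not_nil_iff.mp hnnq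
  refine ⟨w₁, w₂, ?_, h₁, h₂, ?_, ?_⟩
  · rintro rfl
    have hq2path : q₂.IsPath := by
      rw [hq2] at hqr
      exact (Walk.cons_isPath_iff _ _).mp hqr |>.1
    have : q₂.Nil := isPath_loop_nil hq2path
    have hlen : q.reverse.length = 1 := by
      rw [hq2, Walk.length_cons, Walk.nil_iff_length_eq.mp this]
    rw [Walk.length_reverse] at hlen
    have := hc.three_le_length
    rw [Walk.length_cons, hlen] at this
    omega
  · simp
  · have : w₂ ∈ q.reverse.support := by
      rw [hq2]
      simp
    rw [Walk.support_reverse, List.mem_reverse] at this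
    simp [this]

lemma pendant {T : Set V} {v : V} (hacyc : AcycOn G T) (hv : v ∉ T)
    (hone : ∀ w₁ ∈ T, ∀ w₂ ∈ T, G.Adj v w₁ → G.Adj v w₂ → w₁ = w₂) :
    AcycOn G (insert v T) := by
  classical
  intro u c hc
  by_contra hall
  push_neg at hall
  by_cases hvc : v ∈ c.support
  · have hc' := hc.rotate hvc
    obtain ⟨w₁, w₂, hne, ha₁, ha₂, hm₁, hm₂⟩ := cycle_two_nbrs hc'
    have hsub : ∀ z ∈ (c.rotate v hvc).support, z ∈ insert v T := by
      intro z hz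
      have hperm := Walk.support_rotate c v hvc
      rw [Walk.support_eq_cons] at hz
      rcases List.eq_or_mem_of_mem_cons hz with h | h
      · exact h ▸ Set.mem_insert v T
      · exact hall z (List.mem_of_mem_tail (hperm.mem_iff.mp h))
    have h₁T : w₁ ∈ T := by
      rcases hsub w₁ hm₁ with h | h
      · exact absurd h ha₁.ne'
      · exact h
    have h₂T : w₂ ∈ T := by
      rcases hsub w₂ hm₂ with h | h
      · exact absurd h ha₂.ne'
      · exact h
    exact hne (hone _ h₁T _ h₂T ha₁ ha₂)
  · obtain ⟨z, hz, hzT⟩ := hacyc c hc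
    rcases hall z hz with h | h
    · exact hvc (h ▸ hz)
    · exact hzT h

lemma add_path [Fintype V] {m : V} : ∀ {u : V} (W : G.Walk u m) {T : Set V} {c : V},
    W.IsPath → (∀ z ∈ W.support, z ∉ T) → c ∈ T → G.Adj c u →
    (∀ z ∈ W.support, degOf G z = 2) → AcycOn G T →
    AcycOn G (T ∪ {z | z ∈ W.support ∧ z ≠ m})
  | _, Walk.nil, T, c, hW, hdisj, hcT, hcu, hdeg, hacyc => by
      have he : {z | z ∈ (Walk.nil : G.Walk m m).support ∧ z ≠ m} = (∅ : Set V) := by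
        ext z; simp +contextual
      rw [he, Set.union_empty]; exact hacyc
  | _, @Walk.cons _ _ u u' _ hadj q, T, c, hW, hdisj, hcT, hcu, hdeg, hacyc => by
      have hup : u ∉ q.support := ((Walk.cons_isPath_iff hadj q).mp hW).2
      have hqpath : q.IsPath := ((Walk.cons_isPath_iff hadj q).mp hW).1
      have hum : u ≠ m := fun h => hup (h ▸ q.end_mem_support)
      have huT : u ∉ T := hdisj u (Walk.start_mem_support _)
      have hu'T : u' ∉ T := hdisj u' (by simp [q.start_mem_support])
      have hcne : c ≠ u' := fun h => hu'T (h ▸ hcT)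
      have hpend : AcycOn G (insert u T) := by
        apply pendant hacyc huT
        intro w₁ h₁ w₂ h₂ a₁ a₂
        have hdegu := hdeg u (Walk.start_mem_support _)
        rcases adj_mem_pair hdegu hcne hcu.symm hadj a₁ with rfl | rfl
        · rcases adj_mem_pair hdegu hcne hcu.symm hadj a₂ with rfl | rfl
          · rfl
          · exact absurd h₂ hu'T
        · exact absurd h₁ hu'T
      have hrec := add_path q (T := insert u T) (c := u) hqpath
        (fun z hz => by
          rintro (h | h)
          · exact hup (h ▸ hz)
          · exact hdisj z (by simp [hz]) h)
        (Set.mem_insert u T) hadj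
        (fun z hz => hdeg z (by simp [hz])) hpend
      have hset : insert u T ∪ {z | z ∈ q.support ∧ z ≠ m}
          = T ∪ {z | z ∈ (Walk.cons hadj q).support ∧ z ≠ m} := by
        ext z
        simp only [Set.mem_union, Set.mem_insert_iff, Set.mem_setOf_eq, Walk.support_cons,
          List.mem_cons]
        constructor
        · rintro ((rfl | h) | ⟨h1, h2⟩)
          · exact Or.inr ⟨Or.inl rfl, hum⟩
          · exact Or.inl h
          · exact Or.inr ⟨Or.inr h1, h2⟩
        · rintro (h | ⟨(rfl | h1), h2⟩)
          · exact Or.inl (Or.inr h)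
          · exact Or.inl (Or.inl rfl)
          · exact Or.inr ⟨h1, h2⟩
      rw [← hset]
      exact hrec

lemma reachable_transfer {D : Set V} {p q : V} (W : G.Walk p q)
    (h : ∀ z ∈ W.support, z ∉ D) : (gdelete G D).Reachable p q := by
  refine ⟨W.transfer _ (fun e => ?_)⟩
  induction e using Sym2.ind with
  | _ s t =>
    intro he
    rw [mem_edgeSet]
    have hG := W.edges_subset_edgeSet he
    rw [mem_edgeSet] at hG
    exact ⟨hG, h s (W.fst_mem_support_of_mem_edges he), h t (W.snd_mem_support_of_mem_edges he)⟩

lemma not_mem_takeUntil_end [DecidableEq V] {p q u : V} {W : G.Walk p q} (hW : W.IsPath)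
    (hu : u ∈ W.support) (hne : u ≠ q) : q ∉ (W.takeUntil u hu).support := by
  intro hmem
  have hsup : W.support = (W.takeUntil u hu).support ++ (W.dropUntil u hu).support.tail := by
    conv_lhs => rw [← W.take_spec hu]
    exact Walk.support_append _ _
  have hnd := hW.support_nodup
  rw [hsup] at hnd
  have hdis := (List.nodup_append'.mp hnd).2.2
  have hq : q ∈ (W.dropUntil u hu).support := Walk.end_mem_support _
  rw [Walk.support_eq_cons] at hq
  rcases List.mem_cons.mp hq with h | h
  · exact hne h.symm
  · exact hdis hmem h

lemma not_mem_dropUntil_start [DecidableEq V] {p q u : V} {W : G.Walk p q} (hW : W.IsPath)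
    (hu : u ∈ W.support) (hne : u ≠ p) : p ∉ (W.dropUntil u hu).support := by
  intro hmem
  have hsup : W.support = (W.takeUntil u hu).support ++ (W.dropUntil u hu).support.tail := by
    conv_lhs => rw [← W.take_spec hu]
    exact Walk.support_append _ _
  have hnd := hW.support_nodup
  rw [hsup] at hnd
  have hdis := (List.nodup_append'.mp hnd).2.2
  have hp : p ∈ (W.takeUntil u hu).support := Walk.start_mem_support _
  rw [Walk.support_eq_cons] at hmem
  rcases List.mem_cons.mp hmem with h | h
  · exact hne h.symm
  · exact hdis hp h

lemma nbr_subset [Fintype V] {x y z : V} {P : G.Walk x y} (hP : P.IsPath)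
    (hdeg2 : degOf G z = 2) (hz : z ∈ P.support) (hzx : z ≠ x) (hzy : z ≠ y) :
    G.neighborSet z ⊆ {w | w ∈ P.support} := by
  classical
  have hnn1 : ¬ (P.takeUntil z hz).reverse.Nil := Walk.not_nil_of_ne hzx
  have hnn2 : ¬ (P.dropUntil z hz).Nil := Walk.not_nil_of_ne hzy
  obtain ⟨prev, hp, qp, hqp⟩ := Walk.not_nil_iff.mp hnn1
  obtain ⟨nxt, hn, qn, hqn⟩ := Walk.not_nil_iff.mp hnn2
  have hprev_t : prev ∈ (P.takeUntil z hz).support := by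
    have : prev ∈ (P.takeUntil z hz).reverse.support := by
      rw [hqp]; simp [qp.start_mem_support]
    rwa [Walk.support_reverse, List.mem_reverse] at this
  have hnxt_tail : nxt ∈ (P.dropUntil z hz).support.tail := by
    rw [hqn]; simp [qn.start_mem_support]
  have hsup : P.support = (P.takeUntil z hz).support ++ (P.dropUntil z hz).support.tail := by
    conv_lhs => rw [← P.take_spec hz]
    exact Walk.support_append _ _
  have hnd := hP.support_nodup
  rw [hsup] at hnd
  have hdis := (List.nodup_append'.mp hnd).2.2
  have hne : prev ≠ nxt := fun h => hdis hprev_t (h ▸ hnxt_tail)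
  rw [nbrs_eq hdeg2 hne hp hn]
  rintro w (rfl | rfl)
  · exact hsup ▸ List.mem_append.mpr (Or.inl hprev_t)
  · exact hsup ▸ List.mem_append.mpr (Or.inr hnxt_tail)

lemma adj_endpoint [Fintype V] {x y : V} {P : G.Walk x y} (hP : P.IsPath)
    (hdeg : ∀ z ∈ P.support, degOf G z = 2) {w : V} (hw : w ∉ P.support)
    (hadj : ∃ z ∈ P.support, G.Adj w z) : G.Adj w x ∨ G.Adj w y := by
  obtain ⟨z, hz, ha⟩ := hadj
  by_cases hzx : z = x
  · exact Or.inl (hzx ▸ ha)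
  by_cases hzy : z = y
  · exact Or.inr (hzy ▸ ha)
  exact absurd (nbr_subset hP (hdeg z hz) hz hzx hzy (ha.symm : w ∈ G.neighborSet z)) (by
    simp only [Set.mem_setOf_eq]
    exact hw)

lemma endpoint_cap [Fintype V] {x y w₁ w₂ : V} {P : G.Walk x y} (hP : P.IsPath) (hxy : x ≠ y)
    (hdege : degOf G x = 2) (h1 : w₁ ∉ P.support) (h2 : w₂ ∉ P.support) (hne : w₁ ≠ w₂)
    (ha1 : G.Adj w₁ x) (ha2 : G.Adj w₂ x) : False := by
  have hnn : ¬ P.Nil := Walk.not_nil_of_ne hxy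
  obtain ⟨s, hs, q, hq⟩ := Walk.not_nil_iff.mp hnn
  have hsP : s ∈ P.support := by rw [hq]; simp [q.start_mem_support]
  have hset := nbrs_eq hdege hne ha1.symm ha2.symm
  have hmem : s ∈ ({w₁, w₂} : Set V) := hset ▸ (hs : s ∈ G.neighborSet x)
  rcases hmem with h | h
  · exact h1 (h ▸ hsP)
  · exact h2 (h ▸ hsP)

lemma main_aux [Fintype V] (G : SimpleGraph V)
    (x y : V) (P : G.Walk x y) (hP : P.IsPath)
    (VP : Set V) (hVP : VP = {z | z ∈ P.support})
    (hdeg : ∀ z ∈ VP, degOf G z = 2)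
    (a b : V) (hab : a ≠ b)
    (hNP : openNbhd G VP = {a, b})
    (S : Set V) (hSP : Disjoint S VP)
    (r : V) (hrP : r ∉ VP) (hrS : r ∉ S)
    (H : Set V) (hH : H = component G (VP ∪ S) r)
    (hac : (G.induce H).IsAcyclic) (haH : a ∈ H) (hbH : b ∈ H)
    (hax : G.Adj a x) (hby : G.Adj b y) :
    ∀ m ∈ VP,
      (G.induce (component G (S ∪ {m}) r)).IsAcyclic ∧
      component G (S ∪ {m}) r = H ∪ (VP \ {m}) ∧
      m ∈ openNbhd G (component G (S ∪ {m}) r) := by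
  classical
  have hrVPS : r ∉ VP ∪ S := by rintro (h | h); exacts [hrP h, hrS h]
  have hHd : ∀ v ∈ H, v ∉ VP ∪ S := by rw [hH]; exact component_not_mem hrVPS
  have haVP : a ∉ VP := by
    have ha' : a ∈ openNbhd G VP := by rw [hNP]; exact Set.mem_insert _ _
    exact ha'.1
  have hbVP : b ∉ VP := by
    have hb' : b ∈ openNbhd G VP := by rw [hNP]; exact Set.mem_insert_of_mem _ rfl
    exact hb'.1
  have hVPS : ∀ z ∈ VP, z ∉ S := fun z hz hzS => (Set.disjoint_left.mp hSP hzS) hz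
  intro m hm
  have hmP : m ∈ P.support := by rw [hVP] at hm; exact hm
  have hmem_VP : ∀ z, z ∈ P.support → z ∈ VP := fun z hz => by rw [hVP]; exact hz
  have hsubD : S ∪ {m} ⊆ VP ∪ S := by
    rintro z (h | h)
    · exact Or.inr h
    · exact Or.inl (h ▸ hm)
  have hmono : gdelete G (VP ∪ S) ≤ gdelete G (S ∪ {m}) := gdelete_anti hsubD
  have hnotD : ∀ z ∈ H, z ∉ S ∪ {m} := by
    intro z hz
    rintro (h | h)
    · exact hHd z hz (Or.inr h)
    · exact hHd z hz (Or.inl (h ▸ hm))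
  have haD : a ∉ S ∪ {m} := hnotD a haH
  have hbD : b ∉ S ∪ {m} := hnotD b hbH
  have hVPD : ∀ z, z ∈ P.support → z ≠ m → z ∉ S ∪ {m} := by
    intro z hz hzm
    rintro (h | h)
    · exact hVPS z (hmem_VP z hz) h
    · exact hzm h
  have hQ1path : (P.takeUntil m hmP).IsPath := hP.takeUntil hmP
  have hQ2path : (P.dropUntil m hmP).IsPath := hP.dropUntil hmP
  have hsupP : P.support
      = (P.takeUntil m hmP).support ++ (P.dropUntil m hmP).support.tail := by
    conv_lhs => rw [← P.take_spec hmP]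
    exact Walk.support_append _ _
  have hnodup : ((P.takeUntil m hmP).support ++ (P.dropUntil m hmP).support.tail).Nodup := by
    rw [← hsupP]; exact hP.support_nodup
  have hdisj12 : List.Disjoint (P.takeUntil m hmP).support (P.dropUntil m hmP).support.tail :=
    (List.nodup_append'.mp hnodup).2.2
  have hQ1P : ∀ z ∈ (P.takeUntil m hmP).support, z ∈ P.support :=
    fun z hz => P.support_takeUntil_subset hmP hz
  have hQ2P : ∀ z ∈ (P.dropUntil m hmP).support, z ∈ P.support :=
    fun z hz => P.support_dropUntil_subset hmP hz
  have hreachH : ∀ u ∈ H, (gdelete G (S ∪ {m})).Reachable r u := by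
    intro u hu
    rw [hH] at hu
    exact Reachable.mono hmono hu
  have hreach1 : ∀ u (hu : u ∈ (P.takeUntil m hmP).support), u ≠ m →
      (gdelete G (S ∪ {m})).Reachable r u := by
    intro u hu hum
    have hmW : m ∉ ((P.takeUntil m hmP).takeUntil u hu).support :=
      not_mem_takeUntil_end hQ1path hu hum
    have hWsup : ∀ z ∈ ((P.takeUntil m hmP).takeUntil u hu).support, z ∉ S ∪ {m} := by
      intro z hz
      exact hVPD z (hQ1P z ((P.takeUntil m hmP).support_takeUntil_subset hu hz))
        (fun h => hmW (h ▸ hz))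
    have hxD : x ∉ S ∪ {m} := hWsup x (Walk.start_mem_support _)
    exact ((hreachH a haH).trans (Adj.reachable ⟨hax, haD, hxD⟩)).trans
      (reachable_transfer _ hWsup)
  have hreach2 : ∀ u, u ∈ (P.dropUntil m hmP).support.tail →
      (gdelete G (S ∪ {m})).Reachable r u := by
    intro u hu
    have hu2 : u ∈ (P.dropUntil m hmP).support := List.mem_of_mem_tail hu
    have hum : u ≠ m := by
      intro h
      have hnd2 := hQ2path.support_nodup
      rw [Walk.support_eq_cons] at hnd2
      exact (List.nodup_cons.mp hnd2).1 (h ▸ hu)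
    have hmW : m ∉ ((P.dropUntil m hmP).dropUntil u hu2).support :=
      not_mem_dropUntil_start hQ2path hu2 hum
    have hWsup : ∀ z ∈ ((P.dropUntil m hmP).dropUntil u hu2).support, z ∉ S ∪ {m} := by
      intro z hz
      exact hVPD z (hQ2P z ((P.dropUntil m hmP).support_dropUntil_subset hu2 hz))
        (fun h => hmW (h ▸ hz))
    have hyD : y ∉ S ∪ {m} := hWsup y (Walk.end_mem_support _)
    exact ((hreachH b hbH).trans (Adj.reachable ⟨hby, hbD, hyD⟩)).trans
      (Reachable.symm (reachable_transfer _ hWsup))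
  have hcomp : component G (S ∪ {m}) r = H ∪ (VP \ {m}) := by
    apply component_eq
    · exact Or.inl (by rw [hH]; exact mem_component_self)
    · rintro u hu v ⟨hadj, huD, hvD⟩
      rcases hu with huH | ⟨huVP, hum⟩
      · by_cases hvVP : v ∈ VP
        · exact Or.inr ⟨hvVP, fun h => hvD (Or.inr h)⟩
        · refine Or.inl ?_
          rw [hH]
          have hru : (gdelete G (VP ∪ S)).Reachable r u := by rw [hH] at huH; exact huH
          refine hru.trans (Adj.reachable ⟨hadj, hHd u huH, ?_⟩)
          rintro (h | h)
          · exact hvVP h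
          · exact hvD (Or.inl h)
      · by_cases hvVP : v ∈ VP
        · exact Or.inr ⟨hvVP, fun h => hvD (Or.inr h)⟩
        · have hvN : v ∈ openNbhd G VP := ⟨hvVP, u, huVP, hadj.symm⟩
          rw [hNP] at hvN
          rcases hvN with h | h
          · exact Or.inl (h ▸ haH)
          · exact Or.inl (h ▸ hbH)
    · rintro u (huH | ⟨huVP, hum⟩)
      · exact hreachH u huH
      · have hup : u ∈ P.support := by rw [hVP] at huVP; exact huVP
        rw [hsupP, List.mem_append] at hup
        rcases hup with h | h
        · exact hreach1 u h (fun hh => hum hh)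
        · exact hreach2 u h
  have hdisjHVP : ∀ z, z ∈ P.support → z ∉ H :=
    fun z hz hzH => hHd z hzH (Or.inl (hmem_VP z hz))
  have hstep1 : AcycOn G (H ∪ {z | z ∈ (P.takeUntil m hmP).support ∧ z ≠ m}) :=
    add_path (P.takeUntil m hmP) hQ1path (fun z hz => hdisjHVP z (hQ1P z hz)) haH hax
      (fun z hz => hdeg z (hmem_VP z (hQ1P z hz))) (acycOn_of_induce hac)
  have hstep2 : AcycOn G ((H ∪ {z | z ∈ (P.takeUntil m hmP).support ∧ z ≠ m})
      ∪ {z | z ∈ (P.dropUntil m hmP).reverse.support ∧ z ≠ m}) := by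
    refine add_path (P.dropUntil m hmP).reverse hQ2path.reverse ?_ (Or.inl hbH) hby
      (fun z hz => hdeg z (hmem_VP z (hQ2P z
        (by rwa [Walk.support_reverse, List.mem_reverse] at hz)))) hstep1
    intro z hz
    rw [Walk.support_reverse, List.mem_reverse] at hz
    rintro (hzH | ⟨hz1, hzm⟩)
    · exact hdisjHVP z (hQ2P z hz) hzH
    · rw [Walk.support_eq_cons] at hz
      rcases List.mem_cons.mp hz with h | h
      · exact hzm h
      · exact hdisj12 hz1 h
  have hsetEq : (H ∪ {z | z ∈ (P.takeUntil m hmP).support ∧ z ≠ m})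
      ∪ {z | z ∈ (P.dropUntil m hmP).reverse.support ∧ z ≠ m} = H ∪ (VP \ {m}) := by
    ext z
    simp only [Set.mem_union, Set.mem_setOf_eq, Set.mem_diff, Set.mem_singleton_iff,
      Walk.support_reverse, List.mem_reverse, hVP]
    constructor
    · rintro ((h | ⟨h1, h2⟩) | ⟨h1, h2⟩)
      · exact Or.inl h
      · exact Or.inr ⟨hQ1P z h1, h2⟩
      · exact Or.inr ⟨hQ2P z h1, h2⟩
    · rintro (h | ⟨h1, h2⟩)
      · exact Or.inl (Or.inl h)
      · rw [hsupP, List.mem_append] at h1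
        rcases h1 with h | h
        · exact Or.inl (Or.inr ⟨h, h2⟩)
        · exact Or.inr ⟨List.mem_of_mem_tail h, h2⟩
  have hacyc_final : (G.induce (component G (S ∪ {m}) r)).IsAcyclic := by
    rw [hcomp, ← hsetEq]
    exact induce_acyclic_of_acycOn hstep2
  refine ⟨hacyc_final, hcomp, ⟨?_, ?_⟩⟩
  · rw [hcomp]
    rintro (h | ⟨h1, h2⟩)
    · exact hdisjHVP m hmP h
    · exact h2 rfl
  · rw [hcomp]
    by_cases hmx : m = x
    · exact ⟨a, Or.inl haH, by rw [hmx]; exact hax.symm⟩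
    · have hnn : ¬ (P.takeUntil m hmP).reverse.Nil := Walk.not_nil_of_ne hmx
      obtain ⟨u2, h2, q2, hq2⟩ := Walk.not_nil_iff.mp hnn
      have hu2 : u2 ∈ (P.takeUntil m hmP).support := by
        have hmem : u2 ∈ (P.takeUntil m hmP).reverse.support := by
          rw [hq2]; simp [q2.start_mem_support]
        rwa [Walk.support_reverse, List.mem_reverse] at hmem
      exact ⟨u2, Or.inr ⟨by rw [hVP]; exact hQ1P u2 hu2, fun h => h2.ne' h⟩, h2⟩

lemma main_aux_dispatch [Fintype V] (G : SimpleGraph V)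
    (x y : V) (P : G.Walk x y) (hP : P.IsPath)
    (VP : Set V) (hVP : VP = {z | z ∈ P.support})
    (hdeg : ∀ z ∈ VP, degOf G z = 2)
    (a b : V) (hab : a ≠ b)
    (hNP : openNbhd G VP = {a, b})
    (S : Set V) (hSP : Disjoint S VP)
    (r : V) (hrP : r ∉ VP) (hrS : r ∉ S)
    (H : Set V) (hH : H = component G (VP ∪ S) r)
    (hac : (G.induce H).IsAcyclic) (haH : a ∈ H) (hbH : b ∈ H) :
    ∀ m ∈ VP,
      (G.induce (component G (S ∪ {m}) r)).IsAcyclic ∧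
      component G (S ∪ {m}) r = H ∪ (VP \ {m}) ∧
      m ∈ openNbhd G (component G (S ∪ {m}) r) := by
  classical
  have haN : a ∈ openNbhd G VP := by rw [hNP]; exact Set.mem_insert _ _
  have hbN : b ∈ openNbhd G VP := by rw [hNP]; exact Set.mem_insert_of_mem _ rfl
  have haP : a ∉ P.support := fun h => haN.1 (by rw [hVP]; exact h)
  have hbP : b ∉ P.support := fun h => hbN.1 (by rw [hVP]; exact h)
  have hdeg' : ∀ z ∈ P.support, degOf G z = 2 := fun z hz => hdeg z (by rw [hVP]; exact hz)
  have haO : G.Adj a x ∨ G.Adj a y := by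
    obtain ⟨-, z, hz, hadj⟩ := haN
    refine adj_endpoint hP hdeg' haP ⟨z, ?_, hadj⟩
    rw [hVP] at hz; exact hz
  have hbO : G.Adj b x ∨ G.Adj b y := by
    obtain ⟨-, z, hz, hadj⟩ := hbN
    refine adj_endpoint hP hdeg' hbP ⟨z, ?_, hadj⟩
    rw [hVP] at hz; exact hz
  by_cases hxy : x = y
  · subst hxy
    rcases haO with hax | hax <;> rcases hbO with hbx | hbx <;>
      exact main_aux G x x P hP VP hVP hdeg a b hab hNP S hSP r hrP hrS H hH hac haH hbH hax hbx
  · rcases haO with hax | hay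
    · rcases hbO with hbx | hby
      · exact (endpoint_cap hP hxy (hdeg' x P.start_mem_support) haP hbP hab hax hbx).elim
      · exact main_aux G x y P hP VP hVP hdeg a b hab hNP S hSP r hrP hrS H hH hac haH hbH hax hby
    · rcases hbO with hbx | hby
      · exact main_aux G x y P hP VP hVP hdeg b a hab.symm (by rw [hNP]; exact Set.pair_comm a b)
          S hSP r hrP hrS H hH hac hbH haH hbx hay
      · refine (endpoint_cap hP.reverse (fun h => hxy h.symm) (hdeg' y P.end_mem_support)
          ?_ ?_ hab hay hby).elim
        · rw [Walk.support_reverse]; exact fun h => haP (List.mem_reverse.mp h)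
        · rw [Walk.support_reverse]; exact fun h => hbP (List.mem_reverse.mp h)

end Aux

/-- let `P` be a path of degree-2 vertices with `N_G(V(P)) = {a, b}`,
`a ≠ b`. If the component `H` of `(G − V(P)) − S` containing `r` is acyclic and contains
`a` and `b`, then for every `m ∈ V(P)` the component of `(G − S) − m` containing `r` is
acyclic, has vertex set `V(H) ∪ (V(P) \ {m})`, and has `m` in its open neighborhood. -/
theorem path_component_swap [Fintype V] (G : SimpleGraph V)
    (x y : V) (P : G.Walk x y) (hP : P.IsPath)
    (VP : Set V) (hVP : VP = {z | z ∈ P.support})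
    (hdeg : ∀ z ∈ VP, degOf G z = 2)
    (a b : V) (hab : a ≠ b)
    (hNP : openNbhd G VP = {a, b})
    (S : Set V) (hSP : Disjoint S VP)
    (r : V) (hrP : r ∉ VP) (hrS : r ∉ S)
    (H : Set V) (hH : H = component G (VP ∪ S) r)
    (hac : (G.induce H).IsAcyclic) (haH : a ∈ H) (hbH : b ∈ H) :
    ∀ m ∈ VP,
      (G.induce (component G (S ∪ {m}) r)).IsAcyclic ∧
      component G (S ∪ {m}) r = H ∪ (VP \ {m}) ∧
      m ∈ openNbhd G (component G (S ∪ {m}) r) := by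
  exact main_aux_dispatch G x y P hP VP hVP hdeg a b hab hNP S hSP r hrP hrS H hH hac haH hbH

end Secluded
end

section
/- Let G be a finite simple graph and let T ⊆ V(G) with G[T] connected. Let v ∈ T be a degree-1 vertex of G with unique neighbor u, and suppose deg_G(u) ≥ 2. Let T* = (T \ {v}) ∪ {u}. Then |N_{G−v}(T*)| ≥ |N_G(T)|. -/
namespace Secluded

open SimpleGraph

variable {V : Type*}

/-- contracting a degree-1 vertex `v ∈ T` into its unique neighbor `u`
(of degree at least 2) does not decrease the size of the open neighborhood of `T`. -/
theorem contract_leaf_neighborhood [Fintype V] (G : SimpleGraph V)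
    (T : Set V) (hTconn : (G.induce T).Connected)
    (v : V) (hvT : v ∈ T) (u : V) (hvu : G.neighborSet v = {u})
    (hu : 2 ≤ degOf G u) :
    (openNbhd G T).ncard ≤ (openNbhd (gdelete G {v}) ((T \ {v}) ∪ {u})).ncard := by
  have hadjvu : G.Adj v u := by
    have : u ∈ G.neighborSet v := by rw [hvu]; rfl
    exact this
  have huv : u ≠ v := fun h => G.loopless.irrefl v (h ▸ hadjvu.symm)
  by_cases huT : u ∈ T
  · -- T* ⊆ T and N_G(T) ⊆ N_{G-v}(T*)
    have hsub : openNbhd G T ⊆ openNbhd (gdelete G {v}) ((T \ {v}) ∪ {u}) := by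
      rintro x ⟨hxT, t, htT, hadj⟩
      have hxv : x ≠ v := fun h => hxT (h ▸ hvT)
      have htv : t ≠ v := by
        intro h
        subst h
        have : x ∈ G.neighborSet t := hadj.symm
        rw [hvu] at this
        exact hxT (this ▸ huT)
      refine ⟨?_, t, Or.inl ⟨htT, htv⟩, hadj, hxv, htv⟩
      rintro (⟨h1, _⟩ | h2)
      · exact hxT h1
      · exact hxT ((Set.mem_singleton_iff.mp h2) ▸ huT)
    exact Set.ncard_le_ncard hsub (Set.toFinite _)
  · -- connectivity forces T = {v}
    have hT : T = {v} := by
      ext t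
      constructor
      · intro htT
        by_contra hne
        obtain ⟨p⟩ := hTconn.preconnected ⟨v, hvT⟩ ⟨t, htT⟩
        cases p with
        | nil => exact hne rfl
        | @cons _ b _ h q =>
          have : (b : V) ∈ G.neighborSet v := h
          rw [hvu] at this
          exact huT (this ▸ b.2)
      · rintro rfl; exact hvT
    have h1 : openNbhd G T = {u} := by
      ext x
      constructor
      · rintro ⟨hxT, t, htT, hadj⟩
        rw [hT] at htT
        have : x ∈ G.neighborSet v := (Set.mem_singleton_iff.mp htT ▸ hadj).symm
        rw [hvu] at this
        exact this
      · rintro rfl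
        rw [hT]
        exact ⟨fun h => huT (Set.mem_singleton_iff.mp h ▸ hvT), v, rfl, hadjvu.symm⟩
    rw [h1, Set.ncard_singleton]
    -- find a neighbor w of u distinct from v
    have : ∃ w ∈ G.neighborSet u, w ≠ v := by
      by_contra hc
      push_neg at hc
      have : G.neighborSet u ⊆ {v} := fun w hw => hc w hw
      have := Set.ncard_le_ncard this (Set.toFinite _)
      rw [Set.ncard_singleton] at this
      exact absurd (le_trans hu this) (by norm_num)
    obtain ⟨w, hw, hwv⟩ := this
    have hadjuw : G.Adj u w := hw
    have hwmem : w ∈ openNbhd (gdelete G {v}) ((T \ {v}) ∪ {u}) := by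
      refine ⟨?_, u, Or.inr rfl, hadjuw.symm, hwv, huv⟩
      rintro (⟨h1, _⟩ | h2)
      · rw [hT] at h1; exact hwv (Set.mem_singleton_iff.mp h1)
      · exact G.loopless.irrefl u (Set.mem_singleton_iff.mp h2 ▸ hadjuw)
    have : (openNbhd (gdelete G {v}) ((T \ {v}) ∪ {u})).Nonempty := ⟨w, hwmem⟩
    have h2 := this.ncard_pos (Set.toFinite _)
    omega

end Secluded
end
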